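/- Let (X,f) be a non-wandering equicontinuous dynamical system with the shadowing property. Then every point of X is regularly recurrent. -/

import Mathlib

open Set Function

variable {X : Type*}

/-- A `δ`-pseudo-orbit of `f`. -/
def IsPseudoOrbit [MetricSpace X] (f : X → X) (δ : ℝ) (x : ℕ → X) : Prop :=
  ∀ n : ℕ, dist (f (x n)) (x (n + 1)) < δ

/-- `z` ε-traces the sequence `x`. -/
def Traces [MetricSpace X] (f : X → X) (ε : ℝ) (z : X) (x : ℕ → X) : Prop :=
  ∀ n : ℕ, dist (f^[n] z) (x n) < ε

/-- The shadowing property. -/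
def HasShadowing [MetricSpace X] (f : X → X) : Prop :=
  ∀ ε > (0 : ℝ), ∃ δ > (0 : ℝ), ∀ x : ℕ → X, IsPseudoOrbit f δ x → ∃ z : X, Traces f ε z x

/-- The shadowing property of the restriction of `f` to an invariant set `S`. -/
def HasShadowingOn [MetricSpace X] (f : X → X) (S : Set X) : Prop :=
  ∀ ε > (0 : ℝ), ∃ δ > (0 : ℝ), ∀ x : ℕ → X, (∀ n, x n ∈ S) → IsPseudoOrbit f δ x →
    ∃ z ∈ S, Traces f ε z x

/-- Non-wandering point. -/
def NonWanderingPt [TopologicalSpace X] (f : X → X) (x : X) : Prop :=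
  ∀ U ∈ nhds x, ∃ k : ℕ, 1 ≤ k ∧ ∃ y ∈ U, f^[k] y ∈ U

/-- The (forward) orbit of a point. -/
def orbitSet (f : X → X) (x : X) : Set X := Set.range fun n : ℕ => f^[n] x

/-- Recurrent point. -/
def RecurrentPt [TopologicalSpace X] (f : X → X) (x : X) : Prop :=
  ∀ U ∈ nhds x, ∃ k : ℕ, 1 ≤ k ∧ f^[k] x ∈ U

/-- Minimal point: every point of the orbit closure has `x` in its own orbit closure,
i.e. the orbit closure of `x` is a minimal set. -/
def MinimalPt [TopologicalSpace X] (f : X → X) (x : X) : Prop :=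
  ∀ y ∈ closure (orbitSet f x), x ∈ closure (orbitSet f y)

/-- Regularly recurrent point. -/
def RegRecPt [TopologicalSpace X] (f : X → X) (x : X) : Prop :=
  ∀ U ∈ nhds x, ∃ k : ℕ, 1 ≤ k ∧ ∀ n : ℕ, f^[k * n] x ∈ U

/-- Equicontinuity of the family of iterates of `f`. -/
def EquicontinuousMap [MetricSpace X] (f : X → X) : Prop :=
  ∀ ε > (0 : ℝ), ∃ δ > (0 : ℝ), ∀ x y : X, dist x y < δ →
    ∀ n : ℕ, dist (f^[n] x) (f^[n] y) < ε

/-- `u` is a sensitive point of the subsystem on `S`. -/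
def SensitivePtOn [MetricSpace X] (f : X → X) (S : Set X) (u : X) : Prop :=
  ∃ δ > (0 : ℝ), ∀ U ∈ nhds u, ∃ n : ℕ, ∃ a ∈ U ∩ S, ∃ b ∈ U ∩ S,
    dist (f^[n] a) (f^[n] b) > δ

/-- `u` is a sensitive point of `(X,f)`. -/
def SensitivePt [MetricSpace X] (f : X → X) (u : X) : Prop :=
  ∃ δ > (0 : ℝ), ∀ U ∈ nhds u, ∃ n : ℕ, ∃ a ∈ U, ∃ b ∈ U,
    dist (f^[n] a) (f^[n] b) > δ

/-- Topological transitivity. -/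
def TopTransitive {Y : Type*} [TopologicalSpace Y] (g : Y → Y) : Prop :=
  ∀ U V : Set Y, IsOpen U → U.Nonempty → IsOpen V → V.Nonempty →
    ∃ n : ℕ, 1 ≤ n ∧ (g^[n] '' U ∩ V).Nonempty

/-- Weak mixing: the product system is transitive. -/
def WeaklyMixing [TopologicalSpace X] (f : X → X) : Prop :=
  TopTransitive (fun p : X × X => (f p.1, f p.2))

/-- Strong mixing. -/
def StronglyMixing {Y : Type*} [TopologicalSpace Y] (g : Y → Y) : Prop :=
  ∀ U V : Set Y, IsOpen U → U.Nonempty → IsOpen V → V.Nonempty →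
    ∃ N : ℕ, ∀ n ≥ N, (g^[n] '' U ∩ V).Nonempty

/-- The shift map on the full shift over `d` symbols. -/
def shiftMap (d : ℕ) : (ℕ → Fin d) → (ℕ → Fin d) := fun x n => x (n + 1)

/-- `π` is a factor map from the subsystem `(Y, f^[m])` onto the full shift on `d` symbols. -/
def FactorOntoShift [TopologicalSpace X] (f : X → X) (m : ℕ) (Y : Set X) (d : ℕ)
    (π : X → (ℕ → Fin d)) : Prop :=
  ContinuousOn π Y ∧ π '' Y = Set.univ ∧ ∀ y ∈ Y, π (f^[m] y) = shiftMap d (π y)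

theorem nonwandering_equicontinuous_shadowing_all_regrec [MetricSpace X] [CompactSpace X]
    (f : X → X) (hf : Continuous f) (hnw : ∀ x : X, NonWanderingPt f x)
    (heq : EquicontinuousMap f) (hsh : HasShadowing f) :
    ∀ x : X, RegRecPt f x := by
  intro x U hU
  obtain ⟨ε, hε, hball⟩ := Metric.mem_nhds_iff.mp hU
  -- equicontinuity at scale ε/2
  obtain ⟨δ₁, hδ₁, hE1⟩ := heq (ε / 2) (by linarith)
  set ε' : ℝ := min (ε / 2) δ₁ with hε'def
  have hε' : 0 < ε' := lt_min (by linarith) hδ₁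
  -- shadowing at scale ε'
  obtain ⟨δ, hδ, hS⟩ := hsh ε' hε'
  -- equicontinuity at scale δ/2
  obtain ⟨δ₂, hδ₂, hE2⟩ := heq (δ / 2) (by linarith)
  set η : ℝ := min δ₂ (δ / 2) with hηdef
  have hη : 0 < η := lt_min hδ₂ (by linarith)
  -- nonwandering at x for the ball of radius η
  obtain ⟨k, hk1, y, hy, hky⟩ := hnw x (Metric.ball x η) (Metric.ball_mem_nhds x hη)
  have hxy : dist x y < δ₂ := lt_of_lt_of_le (Metric.mem_ball'.mp hy) (min_le_left _ _)
  have hkx : dist (f^[k] x) x < δ := by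
    have h1 : dist (f^[k] x) (f^[k] y) < δ / 2 := hE2 x y hxy k
    have h2 : dist (f^[k] y) x < δ / 2 :=
      lt_of_lt_of_le (Metric.mem_ball.mp hky) (min_le_right _ _)
    calc dist (f^[k] x) x ≤ dist (f^[k] x) (f^[k] y) + dist (f^[k] y) x := dist_triangle _ _ _
      _ < δ / 2 + δ / 2 := by linarith
      _ = δ := by ring
  -- the periodic pseudo-orbit
  set w : ℕ → X := fun n => f^[n % k] x with hwdef
  have hpo : IsPseudoOrbit f δ w := by
    intro n
    have hfw : f (w n) = f^[n % k + 1] x := (Function.iterate_succ_apply' f _ x).symm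
    have hdm := Nat.div_add_mod' n k
    by_cases h : n % k + 1 = k
    · have hmod : (n + 1) % k = 0 := by
        have h2 : n + 1 = (n / k + 1) * k := by rw [Nat.add_mul, Nat.one_mul]; omega
        rw [h2, Nat.mul_mod_left]
      simp only [hfw]
      simp only [hwdef, hmod, h]
      simpa using hkx
    · have hlt : n % k + 1 < k := lt_of_le_of_ne (Nat.mod_lt n (by omega)) h
      have hmod : (n + 1) % k = n % k + 1 := by
        have h2 : n + 1 = n % k + 1 + n / k * k := by omega
        rw [h2, Nat.add_mul_mod_self_right, Nat.mod_eq_of_lt hlt]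
      simp only [hfw]
      simp only [hwdef, hmod]
      simpa using hδ
  obtain ⟨z, hz⟩ := hS w hpo
  have hz0 : dist z x < δ₁ := by
    have := hz 0
    simp only [hwdef, Nat.zero_mod, Function.iterate_zero_apply] at this
    exact lt_of_lt_of_le this (min_le_right _ _)
  refine ⟨k, hk1, fun n => ?_⟩
  have h1 : dist (f^[k * n] z) (f^[k * n] x) < ε / 2 := hE1 z x hz0 (k * n)
  have h2 : dist (f^[k * n] z) x < ε / 2 := by
    have := hz (k * n)
    simp only [hwdef, Nat.mul_mod_right, Function.iterate_zero_apply] at this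
    exact lt_of_lt_of_le this (min_le_left _ _)
  apply hball
  have : dist (f^[k * n] x) x < ε := by
    calc dist (f^[k * n] x) x ≤ dist (f^[k * n] x) (f^[k * n] z) + dist (f^[k * n] z) x :=
        dist_triangle _ _ _
      _ < ε / 2 + ε / 2 := by rw [dist_comm]; linarith
      _ = ε := by ring
  exact Metric.mem_ball.mpr this
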